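/- The cross-ratio map M̄₀,₂^c → [0,∞] sending [(z0+,z0−),(z1+,z1−)] to (−1)^c · ((z1+−z0+)/(z1−−z0+)) : ((z1+−z0−)/(z1−−z0−)) is well-defined on equivalence classes: it is invariant under the action of the subgroup of Möbius transformations commuting with the involution c, where c = τ is z ↦ 1/z̄ (or z ↦ z̄ on the real structure with fixed points) and c = η is the antipodal map z ↦ −1/z̄. -/

import Mathlib

open ComplexConjugate

/-- The cross-ratio of (3.1). -/
noncomputable def crossRatio (z0p z0m z1p z1m : ℂ) : ℂ :=
  ((z1p - z0p) / (z1m - z0p)) / ((z1p - z0m) / (z1m - z0m))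

lemma mobius_diff (a b c d x y : ℂ) (hx : c * x + d ≠ 0) (hy : c * y + d ≠ 0) :
    (a * x + b) / (c * x + d) - (a * y + b) / (c * y + d)
      = ((a * d - b * c) * (x - y)) / ((c * x + d) * (c * y + d)) := by
  rw [div_sub_div _ _ hx hy]
  ring

/-- Well-definedness of the map (3.1): the cross-ratio is invariant under Möbius
transformations (in particular under those commuting with the involution `c`), and for
marked points in conjugate pairs under `c` the value `(-1)^c ·` cross-ratio is a
nonnegative real number: for `c = τ` (`z ↦ conj z`, `(-1)^τ = 1`) and for `c = η`
(`z ↦ -1/conj z`, `(-1)^η = -1`). -/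
theorem stmt_11 :
    (∀ a b c d : ℂ, a * d - b * c ≠ 0 →
      ∀ z0p z0m z1p z1m : ℂ,
        z0p ≠ z0m → z0p ≠ z1p → z0p ≠ z1m → z0m ≠ z1p → z0m ≠ z1m → z1p ≠ z1m →
        c * z0p + d ≠ 0 → c * z0m + d ≠ 0 → c * z1p + d ≠ 0 → c * z1m + d ≠ 0 →
        crossRatio ((a * z0p + b) / (c * z0p + d)) ((a * z0m + b) / (c * z0m + d))
            ((a * z1p + b) / (c * z1p + d)) ((a * z1m + b) / (c * z1m + d)) =
          crossRatio z0p z0m z1p z1m)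
    ∧ (∀ z0 z1 : ℂ, z1 ≠ z0 → conj z1 ≠ z0 → z1 ≠ conj z0 →
        ∃ r : ℝ, 0 ≤ r ∧ crossRatio z0 (conj z0) z1 (conj z1) = (r : ℂ))
    ∧ (∀ z0 z1 : ℂ, z0 ≠ 0 → z1 ≠ 0 → z1 ≠ z0 →
        (-1 / conj z1) ≠ z0 → z1 ≠ -1 / conj z0 →
        ∃ r : ℝ, 0 ≤ r ∧
          -crossRatio z0 (-1 / conj z0) z1 (-1 / conj z1) = (r : ℂ)) := by
  refine ⟨?_, ?_, ?_⟩
  · intro a b c d hdet z0p z0m z1p z1m h01 h02 h03 h04 h05 h06 hd0 hd1 hd2 hd3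
    unfold crossRatio
    rw [mobius_diff a b c d z1p z0p hd2 hd0, mobius_diff a b c d z1m z0p hd3 hd0,
        mobius_diff a b c d z1p z0m hd2 hd1, mobius_diff a b c d z1m z0m hd3 hd1]
    have e1 : z1m - z0p ≠ 0 := sub_ne_zero.mpr (Ne.symm h03)
    have e2 : z1m - z0m ≠ 0 := sub_ne_zero.mpr (Ne.symm h05)
    have e3 : z1p - z0m ≠ 0 := sub_ne_zero.mpr (Ne.symm h04)
    field_simp
  · intro z0 z1 h1 h2 h3
    refine ⟨Complex.normSq (z1 - z0) / Complex.normSq (conj z1 - z0),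
      div_nonneg (Complex.normSq_nonneg _) (Complex.normSq_nonneg _), ?_⟩
    have e1 : conj z1 - z0 ≠ 0 := sub_ne_zero.mpr h2
    have e2 : z1 - conj z0 ≠ 0 := sub_ne_zero.mpr h3
    have e3 : conj z1 - conj z0 ≠ 0 := by
      intro h
      exact sub_ne_zero.mpr h1 (by simpa using congrArg conj h)
    unfold crossRatio
    rw [Complex.ofReal_div]
    rw [← Complex.mul_conj (z1 - z0), ← Complex.mul_conj (conj z1 - z0)]
    simp only [map_sub, Complex.conj_conj]
    field_simp
  · intro z0 z1 hz0 hz1 h1 h2 h3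
    have hc0 : conj z0 ≠ 0 := by simpa using hz0
    have hc1 : conj z1 ≠ 0 := by simpa using hz1
    have hA : z1 - z0 ≠ 0 := sub_ne_zero.mpr h1
    have hB : -1 / conj z1 - z0 ≠ 0 := sub_ne_zero.mpr h2
    have hC : z1 - -1 / conj z0 ≠ 0 := sub_ne_zero.mpr h3
    have hK : 1 + z0 * conj z1 ≠ 0 := by
      intro h
      apply h2
      field_simp
      linear_combination -h
    have hK' : 1 + conj z0 * z1 ≠ 0 := by
      intro h
      apply hK
      have := congrArg conj h
      simpa [mul_comm] using this
    have hD : (-1 / conj z1 : ℂ) - -1 / conj z0 ≠ 0 := by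
      rw [sub_ne_zero]
      intro h
      apply h1
      field_simp at h
      exact (by simpa using congrArg conj h : z0 = z1).symm
    have hE : -(z1 * z0 * conj z1 ^ 2 * conj z0 ^ 2) - z1 * conj z1 * conj z0 ^ 2 +
        (-(z0 * conj z1 ^ 2 * conj z0) - conj z1 * conj z0) ≠ 0 := by
      intro h
      apply mul_ne_zero (mul_ne_zero (mul_ne_zero hc1 hc0) hK) hK'
      linear_combination -h
    have r2 : -1 / conj z1 - z0 = -(1 + z0 * conj z1) / conj z1 := by
      field_simp
      ring
    have r3 : z1 - -1 / conj z0 = (1 + conj z0 * z1) / conj z0 := by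
      field_simp
      ring
    have r4 : -1 / conj z1 - -1 / conj z0 = (conj z1 - conj z0) / (conj z0 * conj z1) := by
      field_simp
      ring
    have hcc : conj z1 - conj z0 ≠ 0 := by
      intro h
      exact sub_ne_zero.mpr h1 (by simpa using congrArg conj h)
    have key : crossRatio z0 (-1 / conj z0) z1 (-1 / conj z1)
        = -((z1 - z0) * (conj z1 - conj z0)) / ((1 + z0 * conj z1) * (1 + conj z0 * z1)) := by
      unfold crossRatio
      rw [r2, r3, r4]
      have hK2 : (-1 - z0 * conj z1 : ℂ) ≠ 0 := fun h => hK (by linear_combination -h)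
      simp only [div_div_eq_mul_div]
      rw [div_eq_div_iff (mul_ne_zero (div_ne_zero hK' hc0) (mul_ne_zero hc0 hc1))
        (mul_ne_zero hK hK')]
      simp only [div_mul_eq_mul_div, ← mul_div_assoc]
      rw [div_eq_div_iff (neg_ne_zero.mpr hK) hc0]
      ring
    refine ⟨Complex.normSq (z1 - z0) / Complex.normSq (1 + z0 * conj z1),
      div_nonneg (Complex.normSq_nonneg _) (Complex.normSq_nonneg _), ?_⟩
    rw [key, Complex.ofReal_div, ← Complex.mul_conj (z1 - z0),
      ← Complex.mul_conj (1 + z0 * conj z1)]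
    simp only [map_sub, map_add, map_mul, map_one, Complex.conj_conj]
    ring
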